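/- Let V₁ and V₂ be linear subspaces of ℝ^n of dimensions k₁ ≥ 1 and k₂ ≥ 1 with k₁ + k₂ = n. For i = 1, 2 assume the linear foliation of T^n by cosets of π(V_i) is irrational, i.e., π restricted to V_i is injective (V_i ∩ ℤ^n = {0}) and π(V_i) is dense in T^n; assume moreover that the subgroup π(V₁) ∩ π(V₂) of T^n contains no one-dimensional (connected, nontrivial) subgroup. Let g: T^n → T^n be a homeomorphism such that for every x ∈ T^n and each i = 1, 2, g maps the coset x + π(V_i) onto the coset g(x) + π(V_i). Then g is affine: there exist B ∈ GL(n,ℤ) and v ∈ ℝ^n such that g = T(v) ∘ L_B. -/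

import Mathlib

open scoped Matrix

/-- The integer lattice `ℤ^n ⊂ ℝ^n`, as an additive subgroup. -/
noncomputable def intLattice (n : ℕ) : AddSubgroup (Fin n → ℝ) :=
  (Submodule.span ℤ (Set.range fun i : Fin n => (Pi.single i 1 : Fin n → ℝ))).toAddSubgroup

/-- The torus `T^n = ℝ^n / ℤ^n`. -/
abbrev Torus (n : ℕ) := (Fin n → ℝ) ⧸ intLattice n

/-- The quotient homomorphism `π : ℝ^n → T^n`. -/
noncomputable def torusPi (n : ℕ) : (Fin n → ℝ) →+ Torus n :=
  QuotientAddGroup.mk' (intLattice n)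

namespace Stmt6Aux

variable {n : ℕ}

lemma mem_intLattice_iff {x : Fin n → ℝ} :
    x ∈ intLattice n ↔ ∀ i, ∃ m : ℤ, x i = (m : ℝ) := by
  have key : ∀ y ∈ Submodule.span ℤ (Set.range fun i : Fin n => (Pi.single i 1 : Fin n → ℝ)),
      ∀ i, ∃ m : ℤ, y i = (m : ℝ) := by
    intro y hy
    induction hy using Submodule.span_induction with
    | mem v hv =>
      obtain ⟨j, rfl⟩ := hv
      intro i
      by_cases h : j = i
      · subst h; exact ⟨1, by simp⟩
      · exact ⟨0, by simp [Pi.single_apply, h]⟩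
    | zero => intro i; exact ⟨0, by simp⟩
    | add a b ha' hb' ha hb =>
      intro i
      obtain ⟨p, hp⟩ := ha i
      obtain ⟨q, hq⟩ := hb i
      exact ⟨p + q, by simp [hp, hq]⟩
    | smul k a ha' ha =>
      intro i
      obtain ⟨p, hp⟩ := ha i
      exact ⟨k * p, by simp [hp]⟩
  constructor
  · exact fun hx => key x hx
  · intro h
    choose m hm using h
    have : x = ∑ i : Fin n, (m i : ℤ) • (Pi.single i (1:ℝ)) := by
      ext j
      rw [Finset.sum_apply]
      simp only [Pi.smul_apply, zsmul_eq_mul]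
      rw [Finset.sum_eq_single j]
      · simp [hm j]
      · intro i _ hij; simp [Pi.single_apply, hij]
      · simp
    rw [this]
    exact Submodule.sum_smul_mem _ _ fun i _ =>
      Submodule.subset_span (Set.mem_range_self i)

lemma intLattice_coe :
    (intLattice n : Set (Fin n → ℝ)) =
      Set.range (fun m : Fin n → ℤ => (fun i => (m i : ℝ))) := by
  ext x
  simp only [SetLike.mem_coe, mem_intLattice_iff, Set.mem_range]
  constructor
  · intro h
    choose m hm using h
    exact ⟨m, by ext i; exact (hm i).symm⟩
  · rintro ⟨m, rfl⟩ i
    exact ⟨m i, rfl⟩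

lemma countable_intLattice : (intLattice n : Set (Fin n → ℝ)).Countable := by
  rw [intLattice_coe]; exact Set.countable_range _

lemma isClosed_intLattice : IsClosed (intLattice n : Set (Fin n → ℝ)) := by
  have : (intLattice n : Set (Fin n → ℝ)) =
      ⋂ i : Fin n, (fun x : Fin n → ℝ => x i) ⁻¹' (Set.range ((↑) : ℤ → ℝ)) := by
    ext x
    simp only [SetLike.mem_coe, mem_intLattice_iff, Set.mem_iInter, Set.mem_preimage,
      Set.mem_range]
    exact ⟨fun h i => (h i).imp fun m hm => hm.symm, fun h i => (h i).imp fun m hm => hm.symm⟩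
  rw [this]
  exact isClosed_iInter fun i =>
    (Int.isClosedEmbedding_coe_real.isClosed_range).preimage (continuous_apply i)

lemma eq_zero_of_mem_of_norm_lt {x : Fin n → ℝ} (hx : x ∈ intLattice n) (h : ‖x‖ < 1) :
    x = 0 := by
  rw [mem_intLattice_iff] at hx
  ext i
  obtain ⟨m, hm⟩ := hx i
  have h1 : ‖x i‖ ≤ ‖x‖ := norm_le_pi_norm x i
  have : |(m : ℝ)| < 1 := by rw [← hm]; exact lt_of_le_of_lt h1 h
  have : m = 0 := Int.abs_lt_one_iff.mp (by exact_mod_cast this)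
  simp [hm, this]

variable {n : ℕ}

lemma continuous_torusPi : Continuous (torusPi n) := continuous_quot_mk

lemma isOpenMap_torusPi : IsOpenMap (torusPi n) := QuotientAddGroup.isOpenMap_coe

lemma surjective_torusPi : Function.Surjective (torusPi n) :=
  QuotientAddGroup.mk'_surjective _

instance torusT3 : T3Space (Torus n) :=
  @QuotientAddGroup.instT3Space _ _ _ _ (intLattice n) inferInstance isClosed_intLattice

instance torusConnected : ConnectedSpace (Torus n) :=
  surjective_torusPi.connectedSpace continuous_torusPi

instance torusCompact : CompactSpace (Torus n) := by
  have h : (Set.univ : Set (Torus n)) =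
      torusPi n '' (Set.pi Set.univ fun _ : Fin n => Set.Icc (0:ℝ) 1) := by
    apply subset_antisymm _ (Set.subset_univ _)
    rintro y -
    obtain ⟨x, rfl⟩ := surjective_torusPi y
    refine ⟨fun i => Int.fract (x i), fun i _ => ⟨Int.fract_nonneg _, (Int.fract_lt_one _).le⟩, ?_⟩
    have : (fun i => Int.fract (x i)) - x ∈ intLattice n := by
      rw [mem_intLattice_iff]
      intro i
      exact ⟨-⌊x i⌋, by simp [Int.fract, sub_eq_add_neg]⟩
    show torusPi n _ = torusPi n x
    rw [← sub_eq_zero, ← map_sub]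
    exact (QuotientAddGroup.eq_zero_iff _).mpr this
  constructor
  rw [h]
  exact ((isCompact_univ_pi fun _ => isCompact_Icc).image continuous_torusPi)

lemma subsingleton_of_preconnected_countable {s : Set (Torus n)}
    (hs : IsPreconnected s) (hc : s.Countable) : s.Subsingleton := by
  intro a ha b hb
  by_contra hab
  obtain ⟨f, hf0, hf1, -⟩ := exists_continuous_zero_one_of_isClosed
    (isClosed_singleton (x := a)) (isClosed_singleton (x := b))
    (by simp [Set.disjoint_singleton, hab])
  have h01 : Set.Icc (0:ℝ) 1 ⊆ f '' s := by
    have := hs.intermediate_value (a := a) (b := b) ha hb f.continuous.continuousOn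
    simpa [hf0 rfl, hf1 rfl] using this
  have : (Set.Icc (0:ℝ) 1).Countable := Set.Countable.mono h01 (hc.image f)
  have hcard : (Cardinal.mk (Set.Icc (0:ℝ) 1)) ≤ Cardinal.aleph0 :=
    Set.Countable.le_aleph0 this
  rw [Cardinal.mk_Icc_real one_pos] at hcard
  exact absurd hcard (not_le.mpr Cardinal.aleph0_lt_continuum)

variable {n : ℕ}

lemma torusPi_inj {x y : Fin n → ℝ} (hx : ‖x‖ < 1/2) (hy : ‖y‖ < 1/2)
    (h : torusPi n x = torusPi n y) : x = y := by
  have hm : x - y ∈ intLattice n := by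
    have : torusPi n (x - y) = 0 := by rw [map_sub, h, sub_self]
    exact (QuotientAddGroup.eq_zero_iff _).mp this
  have h0 := eq_zero_of_mem_of_norm_lt hm (by
    calc ‖x - y‖ ≤ ‖x‖ + ‖y‖ := norm_sub_le _ _
    _ < 1 := by linarith)
  exact sub_eq_zero.mp h0

lemma exists_section :
    ∃ (U : Set (Torus n)) (σ : Torus n → Fin n → ℝ), IsOpen U ∧ (0 : Torus n) ∈ U ∧
      ContinuousOn σ U ∧ (∀ y ∈ U, torusPi n (σ y) = y) ∧ (∀ y ∈ U, ‖σ y‖ < 1/3) := by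
  classical
  set B : Set (Fin n → ℝ) := Metric.ball 0 (1/3) with hB
  have hBnorm : ∀ x ∈ B, ‖x‖ < 1/3 := by
    intro x hx; simpa [hB, dist_zero_right] using hx
  set U : Set (Torus n) := torusPi n '' B with hU
  have hUopen : IsOpen U := isOpenMap_torusPi _ Metric.isOpen_ball
  have h0B : (0 : Fin n → ℝ) ∈ B := by simp [hB]
  have h0U : (0 : Torus n) ∈ U := ⟨0, h0B, map_zero _⟩
  set σ : Torus n → Fin n → ℝ := fun y =>
    if h : ∃ x ∈ B, torusPi n x = y then h.choose else 0 with hσ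
  have hσspec : ∀ y ∈ U, σ y ∈ B ∧ torusPi n (σ y) = y := by
    rintro y ⟨x, hx, rfl⟩
    have h : ∃ x' ∈ B, torusPi n x' = torusPi n x := ⟨x, hx, rfl⟩
    simp only [hσ, dif_pos h]
    exact ⟨h.choose_spec.1, h.choose_spec.2⟩
  have huniq : ∀ y ∈ U, ∀ x ∈ B, torusPi n x = y → σ y = x := by
    intro y hy x hx hxy
    obtain ⟨h1, h2⟩ := hσspec y hy
    exact torusPi_inj (lt_trans (hBnorm _ h1) (by norm_num))
      (lt_trans (hBnorm _ hx) (by norm_num)) (by rw [h2, hxy])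
  refine ⟨U, σ, hUopen, h0U, ?_, fun y hy => (hσspec y hy).2, fun y hy => hBnorm _ (hσspec y hy).1⟩
  intro y₀ hy₀
  have hx₀ := hσspec y₀ hy₀
  rw [ContinuousWithinAt, tendsto_nhds]
  intro O hO hxO
  set W : Set (Fin n → ℝ) := O ∩ B with hW
  have hWopen : IsOpen W := hO.inter Metric.isOpen_ball
  have : torusPi n '' W ∈ nhdsWithin y₀ U := by
    apply mem_nhdsWithin_of_mem_nhds
    exact (isOpenMap_torusPi _ hWopen).mem_nhds ⟨σ y₀, ⟨hxO, hx₀.1⟩, hx₀.2⟩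
  apply Filter.mem_of_superset this
  rintro y ⟨x, ⟨hxO', hxB⟩, rfl⟩
  have hyU : torusPi n x ∈ U := ⟨x, hxB, rfl⟩
  rw [Set.mem_preimage, huniq _ hyU x hxB rfl]
  exact hxO'

variable {n : ℕ}

lemma single_mem_intLattice (j : Fin n) : (Pi.single j 1 : Fin n → ℝ) ∈ intLattice n := by
  rw [mem_intLattice_iff]
  intro i
  by_cases h : j = i
  · subst h; exact ⟨1, by simp⟩
  · exact ⟨0, by simp [Pi.single_apply, h]⟩

lemma lift_hom (f : Torus n → Torus n) (hf : Continuous f)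
    (hadd : ∀ a b, f (a + b) = f a + f b) :
    ∃ B : Matrix (Fin n) (Fin n) ℤ, ∀ x,
      f (torusPi n x) = torusPi n ((B.map (Int.cast : ℤ → ℝ)).mulVec x) := by
  classical
  obtain ⟨U, σ, hUopen, h0U, hσcont, hσπ, hσnorm⟩ := exists_section (n := n)
  set F : Torus n →+ Torus n := AddMonoidHom.mk' f hadd with hF
  set φ : (Fin n → ℝ) →+ Torus n := F.comp (torusPi n) with hφdef
  have hφcont : Continuous φ := (hf.comp continuous_torusPi : _)
  have hUε : φ ⁻¹' U ∈ nhds (0 : Fin n → ℝ) := by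
    apply hφcont.continuousAt.preimage_mem_nhds
    rw [map_zero]; exact hUopen.mem_nhds h0U
  obtain ⟨ε, hε, hball⟩ := Metric.mem_nhds_iff.mp hUε
  set ψ₀ : (Fin n → ℝ) → (Fin n → ℝ) := fun x => σ (φ x) with hψ₀def
  have hmem : ∀ x : Fin n → ℝ, ‖x‖ < ε → φ x ∈ U := fun x hx =>
    hball (by simpa [dist_zero_right] using hx)
  have hπψ₀ : ∀ x, ‖x‖ < ε → torusPi n (ψ₀ x) = φ x := fun x hx => hσπ _ (hmem x hx)
  have hψ₀norm : ∀ x, ‖x‖ < ε → ‖ψ₀ x‖ < 1/3 := fun x hx => hσnorm _ (hmem x hx)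
  have hψ₀add : ∀ x y, ‖x‖ < ε → ‖y‖ < ε → ‖x + y‖ < ε →
      ψ₀ (x + y) = ψ₀ x + ψ₀ y := by
    intro x y hx hy hxy
    have hπ : torusPi n (ψ₀ (x + y) - (ψ₀ x + ψ₀ y)) = 0 := by
      rw [map_sub, map_add, hπψ₀ _ hxy, hπψ₀ _ hx, hπψ₀ _ hy, map_add, sub_self]
    have hmem' := (QuotientAddGroup.eq_zero_iff _).mp hπ
    have h0 := eq_zero_of_mem_of_norm_lt hmem' (by
      have h1 := hψ₀norm _ hxy; have h2 := hψ₀norm _ hx; have h3 := hψ₀norm _ hy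
      calc ‖ψ₀ (x + y) - (ψ₀ x + ψ₀ y)‖ ≤ ‖ψ₀ (x + y)‖ + ‖ψ₀ x + ψ₀ y‖ := norm_sub_le _ _
      _ ≤ ‖ψ₀ (x + y)‖ + (‖ψ₀ x‖ + ‖ψ₀ y‖) := by linarith [norm_add_le (ψ₀ x) (ψ₀ y)]
      _ < 1 := by linarith)
    exact sub_eq_zero.mp h0
  have hnorm_pow : ∀ (k : ℕ) (x : Fin n → ℝ), ‖((2:ℝ)⁻¹) ^ k • x‖ ≤ ‖x‖ := by
    intro k x
    rw [norm_smul, norm_pow, norm_inv, Real.norm_two]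
    have h1 : ((2:ℝ)⁻¹) ^ k ≤ 1 := pow_le_one₀ (by norm_num) (by norm_num)
    calc (2:ℝ)⁻¹ ^ k * ‖x‖ ≤ 1 * ‖x‖ := by
          exact mul_le_mul_of_nonneg_right h1 (norm_nonneg _)
    _ = ‖x‖ := one_mul _
  have hhalf : ∀ x : Fin n → ℝ, ‖x‖ < ε → ψ₀ x = (2:ℝ) • ψ₀ ((2:ℝ)⁻¹ • x) := by
    intro x hx
    set u := (2:ℝ)⁻¹ • x with hu
    have huu : u + u = x := by
      rw [hu, ← add_smul]; norm_num
    have hun : ‖u‖ < ε := by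
      have := hnorm_pow 1 x
      rw [pow_one] at this
      calc ‖u‖ ≤ ‖x‖ := this
      _ < ε := hx
    rw [← huu, hψ₀add u u hun hun (by rw [huu]; exact hx), two_smul]
  have hiter : ∀ (k : ℕ) (x : Fin n → ℝ), ‖x‖ < ε →
      ψ₀ x = (2:ℝ) ^ k • ψ₀ (((2:ℝ)⁻¹) ^ k • x) := by
    intro k
    induction k with
    | zero => intro x _; simp
    | succ k ih =>
      intro x hx
      rw [ih x hx, hhalf (((2:ℝ)⁻¹) ^ k • x) (lt_of_le_of_lt (hnorm_pow k x) hx)]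
      rw [smul_smul, smul_smul]
      have e1 : (2:ℝ) ^ k * 2 = 2 ^ (k + 1) := by ring
      have e2 : ((2:ℝ)⁻¹ * 2⁻¹ ^ k) = 2⁻¹ ^ (k + 1) := by ring
      rw [e1, e2]
  have hwd : ∀ (x : Fin n → ℝ) (k j : ℕ), k ≤ j → ‖((2:ℝ)⁻¹) ^ k • x‖ < ε →
      (2:ℝ) ^ k • ψ₀ (((2:ℝ)⁻¹) ^ k • x) = (2:ℝ) ^ j • ψ₀ (((2:ℝ)⁻¹) ^ j • x) := by
    intro x k j hkj hk
    obtain ⟨d, rfl⟩ := Nat.exists_eq_add_of_le hkj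
    rw [hiter d (((2:ℝ)⁻¹) ^ k • x) hk, smul_smul, smul_smul]
    have e1 : (2:ℝ) ^ k * 2 ^ d = 2 ^ (k + d) := by ring
    have e2 : ((2:ℝ)⁻¹ ^ d * 2⁻¹ ^ k) = 2⁻¹ ^ (k + d) := by ring
    rw [e1, e2]
  have hKex : ∀ x : Fin n → ℝ, ∃ k : ℕ, ‖((2:ℝ)⁻¹) ^ k • x‖ < ε := by
    intro x
    obtain ⟨k, hk⟩ := pow_unbounded_of_one_lt (‖x‖ / ε) (by norm_num : (1:ℝ) < 2)
    refine ⟨k, ?_⟩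
    have h2k : (0:ℝ) < 2 ^ k := by positivity
    have hx2 : ‖x‖ < 2 ^ k * ε := by
      rw [div_lt_iff₀ hε] at hk; linarith
    rw [norm_smul, norm_pow, norm_inv, Real.norm_two, inv_pow]
    rw [inv_mul_lt_iff₀ h2k]
    linarith
  choose K hKspec using hKex
  set ψ : (Fin n → ℝ) → (Fin n → ℝ) :=
    fun x => (2:ℝ) ^ (K x) • ψ₀ (((2:ℝ)⁻¹) ^ (K x) • x) with hψdef
  have hKmono : ∀ (x : Fin n → ℝ) (k j : ℕ), k ≤ j → ‖((2:ℝ)⁻¹) ^ k • x‖ < ε →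
      ‖((2:ℝ)⁻¹) ^ j • x‖ < ε := by
    intro x k j hkj hk
    obtain ⟨d, rfl⟩ := Nat.exists_eq_add_of_le hkj
    have : ((2:ℝ)⁻¹) ^ (k + d) • x = ((2:ℝ)⁻¹) ^ d • (((2:ℝ)⁻¹) ^ k • x) := by
      rw [smul_smul]
      congr 1
      ring
    rw [this]
    exact lt_of_le_of_lt (hnorm_pow d _) hk
  have hψeq : ∀ (x : Fin n → ℝ) (k : ℕ), ‖((2:ℝ)⁻¹) ^ k • x‖ < ε →
      ψ x = (2:ℝ) ^ k • ψ₀ (((2:ℝ)⁻¹) ^ k • x) := by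
    intro x k hk
    rcases le_total (K x) k with h | h
    · exact hwd x (K x) k h (hKspec x)
    · exact (hwd x k (K x) h hk).symm
  have cast2 : ∀ (k : ℕ) (v : Fin n → ℝ), (2:ℝ) ^ k • v = (2 ^ k : ℕ) • v := by
    intro k v
    rw [← Nat.cast_smul_eq_nsmul ℝ]
    norm_num
  have hπψ : ∀ x, torusPi n (ψ x) = φ x := by
    intro x
    have h1 : torusPi n (ψ x) = (2 ^ (K x) : ℕ) • torusPi n (ψ₀ (((2:ℝ)⁻¹) ^ (K x) • x)) := by
      rw [hψdef]
      simp only []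
      rw [cast2, map_nsmul]
    rw [h1, hπψ₀ _ (hKspec x), ← map_nsmul φ, ← Nat.cast_smul_eq_nsmul ℝ]
    congr 1
    rw [smul_smul]
    have : ((2 ^ K x : ℕ) : ℝ) * ((2:ℝ)⁻¹) ^ (K x) = 1 := by
      push_cast
      rw [← mul_pow]
      norm_num
    rw [this, one_smul]
  have hψadd : ∀ x y, ψ (x + y) = ψ x + ψ y := by
    intro x y
    set k := max (max (K x) (K y)) (K (x + y)) with hk
    have hkx : ‖((2:ℝ)⁻¹) ^ k • x‖ < ε :=
      hKmono x (K x) k (le_max_of_le_left (le_max_left _ _)) (hKspec x)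
    have hky : ‖((2:ℝ)⁻¹) ^ k • y‖ < ε :=
      hKmono y (K y) k (le_max_of_le_left (le_max_right _ _)) (hKspec y)
    have hkxy : ‖((2:ℝ)⁻¹) ^ k • (x + y)‖ < ε :=
      hKmono (x + y) (K (x + y)) k (le_max_right _ _) (hKspec (x + y))
    rw [hψeq (x + y) k hkxy, hψeq x k hkx, hψeq y k hky]
    have e3 : ((2:ℝ)⁻¹) ^ k • (x + y) = ((2:ℝ)⁻¹) ^ k • x + ((2:ℝ)⁻¹) ^ k • y :=
      smul_add _ _ _
    rw [e3, hψ₀add _ _ hkx hky (by rw [← e3]; exact hkxy), smul_add]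
  have hψsmall : ∀ x : Fin n → ℝ, ‖x‖ < ε → ψ x = ψ₀ x := by
    intro x hx
    have := hψeq x 0 (by simpa using hx)
    simpa using this
  set Ψ : (Fin n → ℝ) →+ (Fin n → ℝ) := AddMonoidHom.mk' ψ hψadd with hΨdef
  have hψ₀cont : ContinuousAt ψ₀ 0 := by
    have h0' : φ 0 ∈ U := by rw [map_zero]; exact h0U
    exact (hσcont.continuousAt (hUopen.mem_nhds h0')).comp hφcont.continuousAt
  have hΨcont : Continuous ψ := by
    apply continuous_of_continuousAt_zero Ψ
    apply hψ₀cont.congr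
    filter_upwards [Metric.ball_mem_nhds (0 : Fin n → ℝ) hε] with x hx
    exact (hψsmall x (by simpa [dist_zero_right] using hx)).symm
  set L : (Fin n → ℝ) →L[ℝ] (Fin n → ℝ) := AddMonoidHom.toRealLinearMap Ψ hΨcont with hLdef
  have hLψ : ∀ x, L x = ψ x := fun x => rfl
  have hlat : ∀ j : Fin n, ψ (Pi.single j 1) ∈ intLattice n := by
    intro j
    have h1 : torusPi n (Pi.single j (1:ℝ)) = 0 :=
      (QuotientAddGroup.eq_zero_iff _).mpr (single_mem_intLattice j)
    have h2 : φ (Pi.single j (1:ℝ)) = 0 := by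
      rw [hφdef]; simp only [AddMonoidHom.comp_apply]; rw [h1, map_zero]
    have h3 := hπψ (Pi.single j 1)
    rw [h2] at h3
    exact (QuotientAddGroup.eq_zero_iff _).mp h3
  have hml : ∀ j : Fin n, ∃ m : Fin n → ℤ, ψ (Pi.single j 1) = fun i => (m i : ℝ) := by
    intro j
    have h := hlat j
    have h' : ψ (Pi.single j 1) ∈ (intLattice n : Set (Fin n → ℝ)) := h
    rw [intLattice_coe] at h'
    obtain ⟨m, hm⟩ := h'
    exact ⟨m, hm.symm⟩
  choose M hM using hml
  refine ⟨Matrix.of fun i j => M j i, ?_⟩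
  have hmat : ∀ x, ((Matrix.of fun i j => M j i).map (Int.cast : ℤ → ℝ)).mulVec x = ψ x := by
    have heq : ((Matrix.of fun i j => M j i).map (Int.cast : ℤ → ℝ)).mulVecLin
        = (L : (Fin n → ℝ) →ₗ[ℝ] (Fin n → ℝ)) := by
      apply Module.Basis.ext (Pi.basisFun ℝ (Fin n))
      intro j
      rw [Pi.basisFun_apply]
      rw [Matrix.mulVecLin_apply, Matrix.mulVec_single]
      have : (L : (Fin n → ℝ) →ₗ[ℝ] (Fin n → ℝ)) (Pi.single j 1) = ψ (Pi.single j 1) := hLψ _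
      rw [this, hM j]
      funext i
      simp [Matrix.map_apply]
    intro x
    have := congrFun (congrArg (fun (T : (Fin n → ℝ) →ₗ[ℝ] (Fin n → ℝ)) => (T : (Fin n → ℝ) → (Fin n → ℝ))) heq) x
    simpa [Matrix.mulVecLin_apply, hLψ] using this
  intro x
  rw [hmat x]
  exact (hπψ x).symm


end Stmt6Aux

open Stmt6Aux

/-- If `g` is a homeomorphism of `T^n` preserving two transverse irrational linear
foliations whose joint direction groups contain no one-dimensional subgroup, then
`g` is affine: `g = T(v) ∘ L_B` for some `B ∈ GL(n,ℤ)` and `v ∈ ℝ^n`. -/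
theorem stmt6 {n : ℕ} (V₁ V₂ : Submodule ℝ (Fin n → ℝ)) (k₁ k₂ : ℕ)
    (hk₁ : 1 ≤ k₁) (hk₂ : 1 ≤ k₂) (hsum : k₁ + k₂ = n)
    (hd₁ : Module.finrank ℝ V₁ = k₁) (hd₂ : Module.finrank ℝ V₂ = k₂)
    (hinj₁ : ∀ v ∈ V₁, v ∈ intLattice n → v = 0)
    (hinj₂ : ∀ v ∈ V₂, v ∈ intLattice n → v = 0)
    (hdense₁ : Dense (torusPi n '' (V₁ : Set (Fin n → ℝ))))
    (hdense₂ : Dense (torusPi n '' (V₂ : Set (Fin n → ℝ))))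
    (hno1dim : ¬ ∃ w : Fin n → ℝ, w ≠ 0 ∧ ∀ t : ℝ,
      torusPi n (t • w) ∈ (torusPi n '' (V₁ : Set (Fin n → ℝ))) ∩
        (torusPi n '' (V₂ : Set (Fin n → ℝ))))
    (g : Torus n ≃ₜ Torus n)
    (hfol₁ : ∀ x : Torus n,
      g '' {y | ∃ v ∈ V₁, y = x + torusPi n v} = {y | ∃ v ∈ V₁, y = g x + torusPi n v})
    (hfol₂ : ∀ x : Torus n,
      g '' {y | ∃ v ∈ V₂, y = x + torusPi n v} = {y | ∃ v ∈ V₂, y = g x + torusPi n v}) :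
    ∃ (B : Matrix (Fin n) (Fin n) ℤ) (v : Fin n → ℝ), IsUnit B.det ∧
      ∀ x : Fin n → ℝ,
        g (torusPi n x) = torusPi n ((B.map (Int.cast : ℤ → ℝ)).mulVec x + v) := by
  classical
  -- V₁ and V₂ are complementary
  have hdisj : V₁ ⊓ V₂ = ⊥ := by
    rw [Submodule.eq_bot_iff]
    intro w hw
    by_contra hw0
    exact hno1dim ⟨w, hw0, fun t =>
      ⟨⟨t • w, V₁.smul_mem t hw.1, rfl⟩, ⟨t • w, V₂.smul_mem t hw.2, rfl⟩⟩⟩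
  have hfinrank : Module.finrank ℝ (Fin n → ℝ) = n := by
    simp [Module.finrank_pi]
  have hsup : V₁ ⊔ V₂ = ⊤ := by
    apply Submodule.eq_top_of_finrank_eq
    have h1 := Submodule.finrank_sup_add_finrank_inf_eq V₁ V₂
    rw [hdisj] at h1
    simp only [finrank_bot, add_zero] at h1
    rw [hfinrank, h1, hd₁, hd₂, hsum]
  have hcompl : IsCompl V₁ V₂ :=
    ⟨disjoint_iff.mpr hdisj, codisjoint_iff.mpr hsup⟩
  -- the projection onto V₁ along V₂
  set pr : (Fin n → ℝ) →ₗ[ℝ] (Fin n → ℝ) :=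
    V₁.subtype.comp (V₁.linearProjOfIsCompl V₂ hcompl) with hprdef
  have hprV₁ : ∀ v ∈ V₁, pr v = v := by
    intro v hv
    simp [hprdef, Submodule.linearProjOfIsCompl_apply_left hcompl ⟨v, hv⟩]
    exact congrArg Subtype.val (Submodule.linearProjOfIsCompl_apply_left hcompl ⟨v, hv⟩)
  have hprV₂ : ∀ v ∈ V₂, pr v = 0 := by
    intro v hv
    simp [hprdef, Submodule.linearProjOfIsCompl_apply_right hcompl ⟨v, hv⟩]
    exact Submodule.linearProjOfIsCompl_apply_right hcompl ⟨v, hv⟩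
  have hprmem : ∀ x, pr x ∈ V₁ := fun x => (V₁.linearProjOfIsCompl V₂ hcompl x).2
  have hsubmem : ∀ x, x - pr x ∈ V₂ := by
    intro x
    have hx : x ∈ V₁ ⊔ V₂ := hsup.symm ▸ Submodule.mem_top
    obtain ⟨a, ha, b, hb, rfl⟩ := Submodule.mem_sup.mp hx
    have : pr (a + b) = a := by rw [map_add, hprV₁ a ha, hprV₂ b hb, add_zero]
    rw [this]
    simpa using hb
  have hprcont : Continuous pr := pr.continuous_of_finiteDimensional
  -- the intersection group Γ
  set Γ : Set (Torus n) :=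
    (torusPi n '' (V₁ : Set (Fin n → ℝ))) ∩ (torusPi n '' (V₂ : Set (Fin n → ℝ))) with hΓdef
  -- Γ is countable
  have hΓsub : Γ ⊆ (fun m => torusPi n (pr m)) '' (intLattice n : Set (Fin n → ℝ)) := by
    rintro y ⟨⟨v₁, hv₁, hy₁⟩, ⟨v₂, hv₂, hy₂⟩⟩
    have hm : v₁ - v₂ ∈ intLattice n := by
      apply (QuotientAddGroup.eq_zero_iff _).mp
      show torusPi n (v₁ - v₂) = 0
      rw [map_sub, hy₁, hy₂, sub_self]
    refine ⟨v₁ - v₂, hm, ?_⟩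
    simp only [map_sub, hprV₁ v₁ hv₁, hprV₂ v₂ hv₂, sub_zero]
    exact hy₁
  have hΓcount : Γ.Countable :=
    (countable_intLattice.image _).mono hΓsub
  -- Γ is dense
  have hΓdense : Dense Γ := by
    have hS : Dense {x : Fin n → ℝ | ∃ v ∈ V₂, ∃ m ∈ intLattice n, x = v + m} := by
      rw [dense_iff_inter_open]
      rintro O hO ⟨x₀, hx₀⟩
      have h1 : torusPi n x₀ ∈ closure (torusPi n '' (V₂ : Set (Fin n → ℝ))) :=
        hdense₂ _
      have h2 : torusPi n '' O ∈ nhds (torusPi n x₀) :=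
        (isOpenMap_torusPi O hO).mem_nhds ⟨x₀, hx₀, rfl⟩
      obtain ⟨y, hyO, hyV⟩ := mem_closure_iff_nhds.mp h1 _ h2
      obtain ⟨u, huO, hu⟩ := hyO
      obtain ⟨v, hv, hveq⟩ := hyV
      have hm : u - v ∈ intLattice n := by
        apply (QuotientAddGroup.eq_zero_iff _).mp
        show torusPi n (u - v) = 0
        rw [map_sub, hu, ← hveq, sub_self]
      exact ⟨u, huO, v, hv, u - v, hm, by abel⟩
    have himg : ∀ x ∈ {x : Fin n → ℝ | ∃ v ∈ V₂, ∃ m ∈ intLattice n, x = v + m},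
        torusPi n (pr x) ∈ Γ := by
      rintro x ⟨v, hv, m, hm, rfl⟩
      have hpr : pr (v + m) = pr m := by rw [map_add, hprV₂ v hv, zero_add]
      rw [hpr]
      constructor
      · exact ⟨pr m, hprmem m, rfl⟩
      · refine ⟨-(m - pr m), V₂.neg_mem (hsubmem m), ?_⟩
        rw [map_neg, map_sub]
        have : torusPi n m = 0 := (QuotientAddGroup.eq_zero_iff _).mpr hm
        rw [this, zero_sub, neg_neg]
    -- closure Γ contains π '' V₁
    have hconts : Continuous fun x : Fin n → ℝ => torusPi n (pr x) :=
      continuous_torusPi.comp hprcont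
    have hV₁sub : torusPi n '' (V₁ : Set (Fin n → ℝ)) ⊆ closure Γ := by
      rintro y ⟨v, hv, rfl⟩
      have h1 : torusPi n (pr v) = torusPi n v := by rw [hprV₁ v hv]
      rw [← h1]
      have h2 : v ∈ closure {x : Fin n → ℝ | ∃ v ∈ V₂, ∃ m ∈ intLattice n, x = v + m} :=
        hS _
      have h3 := image_closure_subset_closure_image
        (s := {x : Fin n → ℝ | ∃ v ∈ V₂, ∃ m ∈ intLattice n, x = v + m})
        (f := fun x => torusPi n (pr x)) hconts
      have h4 : torusPi n (pr v) ∈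
          closure ((fun x => torusPi n (pr x)) ''
            {x : Fin n → ℝ | ∃ v ∈ V₂, ∃ m ∈ intLattice n, x = v + m}) :=
        h3 ⟨v, h2, rfl⟩
      refine closure_mono ?_ h4
      rintro z ⟨x, hx, rfl⟩
      exact himg x hx
    rw [dense_iff_closure_eq]
    apply Set.eq_univ_of_univ_subset
    calc (Set.univ : Set (Torus n)) = closure (torusPi n '' (V₁ : Set (Fin n → ℝ))) :=
          (dense_iff_closure_eq.mp hdense₁).symm
    _ ⊆ closure (closure Γ) := closure_mono hV₁sub
    _ = closure Γ := closure_closure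
  -- the cocycle is constant
  have hco : ∀ γ ∈ Γ, ∀ x : Torus n, g (x + γ) = g x + (g γ - g 0) := by
    intro γ hγ x
    set Fc : Torus n → Torus n := fun z => g (z + γ) - g z with hFcdef
    have hFccont : Continuous Fc :=
      (g.continuous.comp (continuous_id.add continuous_const)).sub g.continuous
    have hrange : ∀ z, Fc z ∈ Γ := by
      intro z
      obtain ⟨⟨v₁, hv₁, hγ1⟩, ⟨v₂, hv₂, hγ2⟩⟩ := hγ
      constructor
      · have hz : z + γ ∈ {y | ∃ v ∈ V₁, y = z + torusPi n v} :=
          ⟨v₁, hv₁, by rw [hγ1]⟩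
        have h1 : g (z + γ) ∈ {y | ∃ v ∈ V₁, y = g z + torusPi n v} := by
          rw [← hfol₁ z]; exact Set.mem_image_of_mem g hz
        obtain ⟨w, hw, hgw⟩ := h1
        exact ⟨w, hw, by rw [hFcdef]; simp only [hgw]; abel⟩
      · have hz : z + γ ∈ {y | ∃ v ∈ V₂, y = z + torusPi n v} :=
          ⟨v₂, hv₂, by rw [hγ2]⟩
        have h1 : g (z + γ) ∈ {y | ∃ v ∈ V₂, y = g z + torusPi n v} := by
          rw [← hfol₂ z]; exact Set.mem_image_of_mem g hz
        obtain ⟨w, hw, hgw⟩ := h1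
        exact ⟨w, hw, by rw [hFcdef]; simp only [hgw]; abel⟩
    have hconn : IsPreconnected (Set.range Fc) := isPreconnected_range hFccont
    have hsubs : (Set.range Fc).Subsingleton :=
      subsingleton_of_preconnected_countable hconn
        (hΓcount.mono (Set.range_subset_iff.mpr hrange))
    have h1 : Fc x = Fc 0 := hsubs (Set.mem_range_self x) (Set.mem_range_self 0)
    have h2 : Fc 0 = g γ - g 0 := by rw [hFcdef]; simp
    have h3 : Fc x = g (x + γ) - g x := rfl
    rw [h2] at h1
    rw [← h1, h3]
    abel
  -- h is an additive continuous bijection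
  set h : Torus n → Torus n := fun y => g y - g 0 with hhdef
  have hhcont : Continuous h := g.continuous.sub continuous_const
  have hhaddΓ : ∀ γ ∈ Γ, ∀ a, h (a + γ) = h a + h γ := by
    intro γ hγ a
    rw [hhdef]
    simp only []
    rw [hco γ hγ a]
    abel
  have hhadd : ∀ a b, h (a + b) = h a + h b := by
    intro a b
    have hcl : IsClosed {b : Torus n | h (a + b) = h a + h b} :=
      isClosed_eq (hhcont.comp (continuous_const.add continuous_id))
        ((continuous_const).add hhcont)
    have hsubset : Γ ⊆ {b : Torus n | h (a + b) = h a + h b} := fun γ hγ => hhaddΓ γ hγ a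
    have : closure Γ ⊆ {b : Torus n | h (a + b) = h a + h b} :=
      closure_minimal hsubset hcl
    exact this (by rw [dense_iff_closure_eq.mp hΓdense]; trivial)
  set hinv : Torus n → Torus n := fun y => g.symm (y + g 0) with hinvdef
  have hinvcont : Continuous hinv := g.symm.continuous.comp (continuous_id.add continuous_const)
  have hinv_h : ∀ y, hinv (h y) = y := by
    intro y
    rw [hinvdef, hhdef]
    simp only []
    rw [sub_add_cancel, g.symm_apply_apply]
  have h_hinv : ∀ y, h (hinv y) = y := by
    intro y
    rw [hinvdef, hhdef]
    simp only []
    rw [g.apply_symm_apply, add_sub_cancel_right]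
  have hinvadd : ∀ a b, hinv (a + b) = hinv a + hinv b := by
    intro a b
    have hinj : Function.Injective h := Function.LeftInverse.injective hinv_h
    apply hinj
    rw [h_hinv, hhadd, h_hinv, h_hinv]
  obtain ⟨B, hB⟩ := lift_hom h hhcont hhadd
  obtain ⟨C, hC⟩ := lift_hom hinv hinvcont hinvadd
  -- B and C are mutually inverse
  have hzero : ∀ Mr : Matrix (Fin n) (Fin n) ℝ,
      (∀ x, Mr.mulVec x ∈ intLattice n) → Mr = 0 := by
    intro Mr hMr
    have hvec : ∀ x, Mr.mulVec x = 0 := by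
      intro x
      by_contra hne
      set r := Mr.mulVec x with hrdef
      have hr : r ≠ 0 := hne
      have hnorm : ‖r‖ ≠ 0 := norm_ne_zero_iff.mpr hr
      have hpos : 0 < ‖r‖ := lt_of_le_of_ne (norm_nonneg _) (Ne.symm hnorm)
      set t : ℝ := 1 / (2 * ‖r‖) with htdef
      have ht : 0 < t := by positivity
      have hmem : t • r ∈ intLattice n := by
        have := hMr (t • x)
        rwa [Matrix.mulVec_smul] at this
      have hsmall : ‖t • r‖ < 1 := by
        rw [norm_smul, Real.norm_eq_abs, abs_of_pos ht, htdef]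
        rw [div_mul_eq_mul_div, one_mul, div_lt_one (by positivity)]
        linarith
      have h0 := eq_zero_of_mem_of_norm_lt hmem hsmall
      rw [smul_eq_zero] at h0
      rcases h0 with h0 | h0
      · exact absurd h0 (ne_of_gt ht)
      · exact hr h0
    ext i j
    have := congrFun (hvec (Pi.single j 1)) i
    rw [Matrix.mulVec_single] at this
    simpa using this
  have hCB : (C.map (Int.cast : ℤ → ℝ)) * (B.map (Int.cast : ℤ → ℝ)) = 1 := by
    have key : ∀ x, torusPi n
        (((C.map (Int.cast : ℤ → ℝ)) * (B.map (Int.cast : ℤ → ℝ))).mulVec x) = torusPi n x := by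
      intro x
      rw [← Matrix.mulVec_mulVec]
      rw [← hC ((B.map (Int.cast : ℤ → ℝ)).mulVec x), ← hB x, hinv_h]
    have : ((C.map (Int.cast : ℤ → ℝ)) * (B.map (Int.cast : ℤ → ℝ)) - 1) = 0 := by
      apply hzero
      intro x
      apply (QuotientAddGroup.eq_zero_iff _).mp
      show torusPi n _ = 0
      rw [Matrix.sub_mulVec, Matrix.one_mulVec, map_sub, key, sub_self]
    exact sub_eq_zero.mp this
  have hBC : (B.map (Int.cast : ℤ → ℝ)) * (C.map (Int.cast : ℤ → ℝ)) = 1 := by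
    have key : ∀ x, torusPi n
        (((B.map (Int.cast : ℤ → ℝ)) * (C.map (Int.cast : ℤ → ℝ))).mulVec x) = torusPi n x := by
      intro x
      rw [← Matrix.mulVec_mulVec]
      rw [← hB ((C.map (Int.cast : ℤ → ℝ)).mulVec x), ← hC x, h_hinv]
    have : ((B.map (Int.cast : ℤ → ℝ)) * (C.map (Int.cast : ℤ → ℝ)) - 1) = 0 := by
      apply hzero
      intro x
      apply (QuotientAddGroup.eq_zero_iff _).mp
      show torusPi n _ = 0
      rw [Matrix.sub_mulVec, Matrix.one_mulVec, map_sub, key, sub_self]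
    exact sub_eq_zero.mp this
  have hmapRing : ∀ M : Matrix (Fin n) (Fin n) ℤ,
      M.map (Int.cast : ℤ → ℝ) = M.map (Int.castRingHom ℝ) := by
    intro M; rfl
  have hCBZ : C * B = 1 := by
    have h1 : ((C * B).map (Int.cast : ℤ → ℝ))
        = ((1 : Matrix (Fin n) (Fin n) ℤ).map (Int.cast : ℤ → ℝ)) := by
      rw [hmapRing, Matrix.map_mul, hmapRing, Matrix.map_one _ (by simp) (by simp)]
      rw [← hmapRing, ← hmapRing] at *
      exact hCB
    ext i j
    have h2 := congrFun (congrFun (congrArg (fun M => (M : Matrix (Fin n) (Fin n) ℝ)) h1) i) j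
    simp only [Matrix.map_apply] at h2
    exact Int.cast_injective h2
  have hBCZ : B * C = 1 := by
    have h1 : ((B * C).map (Int.cast : ℤ → ℝ))
        = ((1 : Matrix (Fin n) (Fin n) ℤ).map (Int.cast : ℤ → ℝ)) := by
      rw [hmapRing, Matrix.map_mul, hmapRing, Matrix.map_one _ (by simp) (by simp)]
      rw [← hmapRing, ← hmapRing] at *
      exact hBC
    ext i j
    have h2 := congrFun (congrFun (congrArg (fun M => (M : Matrix (Fin n) (Fin n) ℝ)) h1) i) j
    simp only [Matrix.map_apply] at h2
    exact Int.cast_injective h2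
  letI : Invertible B := ⟨C, hCBZ, hBCZ⟩
  have hdet : IsUnit B.det := Matrix.isUnit_det_of_invertible B
  obtain ⟨v, hv⟩ := surjective_torusPi (g 0)
  refine ⟨B, v, hdet, ?_⟩
  intro x
  have h1 : g (torusPi n x) = h (torusPi n x) + g 0 := by
    rw [hhdef]; simp only []; rw [sub_add_cancel]
  rw [h1, hB x, map_add, hv]
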